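/- arXiv:1802.07896 — 6 statements merged into one kernel-verified Lean document; each statement's English description precedes it below -/
import Mathlib

section
/- Let f : ℝ → ℝ be nonexpansive (|f(x) - f(y)| ≤ |x - y| for all x, y) and monotonically increasing. Define h : ℝ → ℝ² by h(x) = (f(x), f(x) - x). Then for every p ≥ 1, h is nonexpansive with respect to the L^p-norm: (|f(x₁)-f(x₂)|^p + |(f(x₁)-x₁)-(f(x₂)-x₂)|^p)^(1/p) ≤ |x₁ - x₂| for all x₁, x₂. -/
lemma aux_rpow (a b p : ℝ) (ha : 0 ≤ a) (hb : 0 ≤ b) (hp : 1 ≤ p) :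
    (a ^ p + b ^ p) ^ (1 / p) ≤ a + b := by
  lift a to NNReal using ha
  lift b to NNReal using hb
  have := NNReal.rpow_add_rpow_le_add a b hp
  exact_mod_cast this

theorem stmt_1 (f : ℝ → ℝ) (hf : ∀ x y : ℝ, |f x - f y| ≤ |x - y|)
    (hmono : Monotone f) (p : ℝ) (hp : 1 ≤ p) (x₁ x₂ : ℝ) :
    (|f x₁ - f x₂| ^ p + |(f x₁ - x₁) - (f x₂ - x₂)| ^ p) ^ (1 / p) ≤ |x₁ - x₂| := by
  have key : |f x₁ - f x₂| + |(f x₁ - x₁) - (f x₂ - x₂)| ≤ |x₁ - x₂| := by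
    rcases le_total x₁ x₂ with h | h
    · have h1 : f x₁ ≤ f x₂ := hmono h
      have h2 : |f x₂ - f x₁| ≤ |x₂ - x₁| := hf x₂ x₁
      rw [abs_of_nonneg (by linarith), abs_of_nonneg (by linarith)] at h2
      rw [abs_of_nonpos (by linarith), abs_of_nonneg (by linarith),
        abs_of_nonpos (by linarith)]
      linarith
    · have h1 : f x₂ ≤ f x₁ := hmono h
      have h2 : |f x₁ - f x₂| ≤ |x₁ - x₂| := hf x₁ x₂
      rw [abs_of_nonneg (by linarith), abs_of_nonneg (by linarith)] at h2
      rw [abs_of_nonneg (by linarith), abs_of_nonpos (by linarith),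
        abs_of_nonneg (by linarith)]
      linarith
  exact le_trans (aux_rpow _ _ p (abs_nonneg _) (abs_nonneg _) hp) key
end

section
/- Let y : ℝⁿ → ℝᴷ be a 1-Lipschitz map with respect to L²-norms (a single-L2NNN classifier's logit map). Suppose for input x₁ the classifier outputs label i with confidence gap g(x₁) = y_i(x₁) - max_{k≠i} y_k(x₁) > 0, and for input x₂ the classifier outputs a different label j (so y_j(x₂) ≥ y_i(x₂)). Then ‖x₂ - x₁‖₂ ≥ g(x₁)/√2. -/
theorem stmt_3 (n K : ℕ)
    (y : EuclideanSpace ℝ (Fin n) → EuclideanSpace ℝ (Fin K))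
    (hy : ∀ a b, ‖y a - y b‖ ≤ ‖a - b‖)
    (x₁ x₂ : EuclideanSpace ℝ (Fin n)) (i j : Fin K) (hij : i ≠ j)
    (g : ℝ)
    (hg : g = y x₁ i -
      (Finset.univ.erase i).sup'
        ⟨j, Finset.mem_erase.mpr ⟨hij.symm, Finset.mem_univ j⟩⟩ (fun k => y x₁ k))
    (hgpos : 0 < g)
    (hx₂ : y x₂ i ≤ y x₂ j) :
    ‖x₂ - x₁‖ ≥ g / Real.sqrt 2 := by
  have hjmem : j ∈ Finset.univ.erase i :=
    Finset.mem_erase.mpr ⟨hij.symm, Finset.mem_univ j⟩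
  have hsup : y x₁ j ≤ (Finset.univ.erase i).sup'
      ⟨j, hjmem⟩ (fun k => y x₁ k) := Finset.le_sup' _ hjmem
  have hgap : g ≤ y x₁ i - y x₁ j := by rw [hg]; linarith
  set d : EuclideanSpace ℝ (Fin K) := y x₁ - y x₂ with hd
  have hdi : d i = y x₁ i - y x₂ i := rfl
  have hdj : d j = y x₁ j - y x₂ j := rfl
  have hdiff : g ≤ d i - d j := by rw [hdi, hdj]; linarith
  have hnormsq : d i ^ 2 + d j ^ 2 ≤ ‖d‖ ^ 2 := by
    have h1 : ‖d‖ ^ 2 = ∑ k, d k ^ 2 := by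
      rw [EuclideanSpace.norm_eq, Real.sq_sqrt (by positivity)]
      simp [sq_abs]
    rw [h1]
    have hsub : ({i, j} : Finset (Fin K)) ⊆ Finset.univ := Finset.subset_univ _
    calc d i ^ 2 + d j ^ 2 = ∑ k ∈ ({i, j} : Finset (Fin K)), d k ^ 2 := by
          rw [Finset.sum_pair hij]
      _ ≤ ∑ k, d k ^ 2 :=
          Finset.sum_le_sum_of_subset_of_nonneg hsub (fun k _ _ => sq_nonneg _)
  have hle : ‖d‖ ≤ ‖x₁ - x₂‖ := hy x₁ x₂
  have hnorm : ‖x₂ - x₁‖ = ‖x₁ - x₂‖ := norm_sub_rev _ _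
  have hN : 0 ≤ ‖x₁ - x₂‖ := norm_nonneg _
  have hdn : 0 ≤ ‖d‖ := norm_nonneg _
  have hsq2 : Real.sqrt 2 > 0 := by positivity
  rw [ge_iff_le, div_le_iff₀ hsq2, hnorm]
  by_contra hcon
  push_neg at hcon
  have h1 : g * g ≤ (d i - d j) * (d i - d j) :=
    mul_le_mul hdiff hdiff hgpos.le (by linarith)
  have h2 : ‖d‖ * ‖d‖ ≤ ‖x₁ - x₂‖ * ‖x₁ - x₂‖ := mul_le_mul hle hle hdn hN
  have h3 : (‖x₁ - x₂‖ * Real.sqrt 2) * (‖x₁ - x₂‖ * Real.sqrt 2) < g * g :=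
    mul_lt_mul'' hcon hcon (by positivity) (by positivity)
  have h4 : Real.sqrt 2 * Real.sqrt 2 = 2 := Real.mul_self_sqrt (by norm_num)
  nlinarith [sq_nonneg (d i + d j)]
end

section
/- Let y : ℝⁿ → ℝᴷ be any map. Suppose x₁ is classified as label i with confidence gap g(x₁) = y_i(x₁) - max_{k≠i} y_k(x₁) > 0 and x₂ is classified as a different label j with confidence gap g(x₂) = y_j(x₂) - max_{k≠j} y_k(x₂) > 0. Then g(x₁) + g(x₂) ≤ √2 · ‖y(x₁) - y(x₂)‖₂. -/
theorem stmt_4 (n K : ℕ)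
    (y : EuclideanSpace ℝ (Fin n) → EuclideanSpace ℝ (Fin K))
    (x₁ x₂ : EuclideanSpace ℝ (Fin n)) (i j : Fin K) (hij : i ≠ j)
    (g₁ g₂ : ℝ)
    (hg₁ : g₁ = y x₁ i -
      (Finset.univ.erase i).sup'
        ⟨j, Finset.mem_erase.mpr ⟨hij.symm, Finset.mem_univ j⟩⟩ (fun k => y x₁ k))
    (hg₂ : g₂ = y x₂ j -
      (Finset.univ.erase j).sup'
        ⟨i, Finset.mem_erase.mpr ⟨hij, Finset.mem_univ i⟩⟩ (fun k => y x₂ k))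
    (hg₁pos : 0 < g₁) (hg₂pos : 0 < g₂) :
    g₁ + g₂ ≤ Real.sqrt 2 * ‖y x₁ - y x₂‖ := by
  set d : EuclideanSpace ℝ (Fin K) := y x₁ - y x₂ with hd
  have hdi : ∀ k, d k = y x₁ k - y x₂ k := fun k => rfl
  have h1 : g₁ ≤ y x₁ i - y x₁ j := by
    rw [hg₁]
    have : y x₁ j ≤ (Finset.univ.erase i).sup'
        ⟨j, Finset.mem_erase.mpr ⟨hij.symm, Finset.mem_univ j⟩⟩ (fun k => y x₁ k) :=
      Finset.le_sup' _ (Finset.mem_erase.mpr ⟨hij.symm, Finset.mem_univ j⟩)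
    linarith
  have h2 : g₂ ≤ y x₂ j - y x₂ i := by
    rw [hg₂]
    have : y x₂ i ≤ (Finset.univ.erase j).sup'
        ⟨i, Finset.mem_erase.mpr ⟨hij, Finset.mem_univ i⟩⟩ (fun k => y x₂ k) :=
      Finset.le_sup' _ (Finset.mem_erase.mpr ⟨hij, Finset.mem_univ i⟩)
    linarith
  have hsum : g₁ + g₂ ≤ d i - d j := by rw [hdi, hdi]; linarith
  have hnorm : ‖d‖ = Real.sqrt (∑ k, (d k)^2) := by
    rw [EuclideanSpace.norm_eq]
    congr 1
    exact Finset.sum_congr rfl fun k _ => by rw [Real.norm_eq_abs, sq_abs]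
  have hpair : (d i)^2 + (d j)^2 ≤ ∑ k, (d k)^2 := by
    calc (d i)^2 + (d j)^2 = ∑ k ∈ ({i, j} : Finset (Fin K)), (d k)^2 := by
          rw [Finset.sum_pair hij]
      _ ≤ ∑ k, (d k)^2 := Finset.sum_le_sum_of_subset_of_nonneg (Finset.subset_univ _)
          (fun k _ _ => sq_nonneg _)
  have key : d i - d j ≤ Real.sqrt 2 * Real.sqrt ((d i)^2 + (d j)^2) := by
    rw [← Real.sqrt_mul (by norm_num)]
    have h0 : d i - d j ≤ |d i - d j| := le_abs_self _
    have : |d i - d j| = Real.sqrt ((d i - d j)^2) := (Real.sqrt_sq_eq_abs _).symm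
    rw [this] at h0
    refine h0.trans (Real.sqrt_le_sqrt ?_)
    nlinarith [sq_nonneg (d i + d j)]
  calc g₁ + g₂ ≤ d i - d j := hsum
    _ ≤ Real.sqrt 2 * Real.sqrt ((d i)^2 + (d j)^2) := key
    _ ≤ Real.sqrt 2 * ‖d‖ := by
        rw [hnorm]
        exact mul_le_mul_of_nonneg_left (Real.sqrt_le_sqrt hpair) (Real.sqrt_nonneg _)
end

section
/- Let each logit y_k : ℝⁿ → ℝ (k = 1,…,K) be individually 1-Lipschitz with respect to the L²-norm on inputs (a multi-L2NNN classifier). Suppose x₁ is classified as label i with confidence gap g(x₁) = y_i(x₁) - max_{k≠i} y_k(x₁) > 0, and x₂ is classified as a different label j (so y_j(x₂) ≥ y_i(x₂)). Then ‖x₂ - x₁‖₂ ≥ g(x₁)/2. -/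
theorem stmt_5 (n K : ℕ)
    (y : Fin K → EuclideanSpace ℝ (Fin n) → ℝ)
    (hy : ∀ k, ∀ a b, |y k a - y k b| ≤ ‖a - b‖)
    (x₁ x₂ : EuclideanSpace ℝ (Fin n)) (i j : Fin K) (hij : i ≠ j)
    (g : ℝ)
    (hg : g = y i x₁ -
      (Finset.univ.erase i).sup'
        ⟨j, Finset.mem_erase.mpr ⟨hij.symm, Finset.mem_univ j⟩⟩ (fun k => y k x₁))
    (hgpos : 0 < g)
    (hx₂ : y i x₂ ≤ y j x₂) :
    ‖x₂ - x₁‖ ≥ g / 2 := by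
  have hjle : y j x₁ ≤ (Finset.univ.erase i).sup'
      ⟨j, Finset.mem_erase.mpr ⟨hij.symm, Finset.mem_univ j⟩⟩ (fun k => y k x₁) :=
    Finset.le_sup' (fun k => y k x₁) (Finset.mem_erase.mpr ⟨hij.symm, Finset.mem_univ j⟩)
  have h1 := (abs_le.mp (hy i x₁ x₂)).2
  have h2 := (abs_le.mp (hy j x₁ x₂)).1
  have hn : ‖x₁ - x₂‖ = ‖x₂ - x₁‖ := norm_sub_rev _ _
  rw [hn] at h1 h2
  linarith
end

section
/- Let y : ℝⁿ → ℝᴷ be 1-Lipschitz with respect to L²-norms, and suppose for x₁, x₂ the classifier assigns different labels i and j with positive confidence gaps g(x₁) and g(x₂). Then ‖x₂ - x₁‖₂ ≥ (g(x₁) + g(x₂))/√2. -/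
theorem stmt_18 (n K : ℕ)
    (y : EuclideanSpace ℝ (Fin n) → EuclideanSpace ℝ (Fin K))
    (hy : ∀ a b, ‖y a - y b‖ ≤ ‖a - b‖)
    (x₁ x₂ : EuclideanSpace ℝ (Fin n)) (i j : Fin K) (hij : i ≠ j)
    (g₁ g₂ : ℝ)
    (hg₁ : g₁ = y x₁ i -
      (Finset.univ.erase i).sup'
        ⟨j, Finset.mem_erase.mpr ⟨hij.symm, Finset.mem_univ j⟩⟩ (fun k => y x₁ k))
    (hg₂ : g₂ = y x₂ j -
      (Finset.univ.erase j).sup'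
        ⟨i, Finset.mem_erase.mpr ⟨hij, Finset.mem_univ i⟩⟩ (fun k => y x₂ k))
    (hg₁pos : 0 < g₁) (hg₂pos : 0 < g₂) :
    ‖x₂ - x₁‖ ≥ (g₁ + g₂) / Real.sqrt 2 := by
  set d : EuclideanSpace ℝ (Fin K) := y x₁ - y x₂ with hd
  have hji : j ∈ Finset.univ.erase i := Finset.mem_erase.mpr ⟨hij.symm, Finset.mem_univ j⟩
  have hij' : i ∈ Finset.univ.erase j := Finset.mem_erase.mpr ⟨hij, Finset.mem_univ i⟩
  have h1 : g₁ ≤ y x₁ i - y x₁ j := by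
    rw [hg₁]
    have := Finset.le_sup' (fun k => y x₁ k) hji
    linarith
  have h2 : g₂ ≤ y x₂ j - y x₂ i := by
    rw [hg₂]
    have := Finset.le_sup' (fun k => y x₂ k) hij'
    linarith
  have hdi : d i = y x₁ i - y x₂ i := by simp [hd]
  have hdj : d j = y x₁ j - y x₂ j := by simp [hd]
  have hsum : g₁ + g₂ ≤ d i - d j := by rw [hdi, hdj]; linarith
  have hsq : d i ^ 2 + d j ^ 2 ≤ ‖d‖ ^ 2 := by
    have hnorm : ‖d‖ ^ 2 = ∑ k, d k ^ 2 := by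
      rw [EuclideanSpace.norm_eq, Real.sq_sqrt (Finset.sum_nonneg fun k _ => sq_nonneg _)]
      simp [Real.norm_eq_abs, sq_abs]
    rw [hnorm]
    have : ∑ k ∈ ({i, j} : Finset (Fin K)), d k ^ 2 ≤ ∑ k, d k ^ 2 :=
      Finset.sum_le_sum_of_subset_of_nonneg (Finset.subset_univ _)
        (fun k _ _ => sq_nonneg _)
    rwa [Finset.sum_pair hij] at this
  have key : d i - d j ≤ Real.sqrt 2 * ‖d‖ := by
    have h2' : (d i - d j) ^ 2 ≤ 2 * ‖d‖ ^ 2 := by nlinarith [sq_nonneg (d i + d j)]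
    nlinarith [Real.sq_sqrt (by norm_num : (2:ℝ) ≥ 0), Real.sqrt_nonneg 2,
      norm_nonneg d, sq_nonneg (Real.sqrt 2 * ‖d‖ - (d i - d j)),
      mul_nonneg (Real.sqrt_nonneg 2) (norm_nonneg d)]
  have hdnorm : ‖d‖ ≤ ‖x₂ - x₁‖ := by
    rw [← norm_neg (x₂ - x₁)]
    simpa [hd] using hy x₁ x₂
  have hs2 : (0:ℝ) < Real.sqrt 2 := Real.sqrt_pos.mpr (by norm_num)
  rw [ge_iff_le, div_le_iff₀ hs2]
  calc g₁ + g₂ ≤ d i - d j := hsum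
    _ ≤ Real.sqrt 2 * ‖d‖ := key
    _ ≤ ‖x₂ - x₁‖ * Real.sqrt 2 := by
        rw [mul_comm]; exact mul_le_mul_of_nonneg_right hdnorm hs2.le
end

section
/- Let each logit y_k : ℝⁿ → ℝ be 1-Lipschitz with respect to the L²-norm, and suppose x₁, x₂ receive different predicted labels i and j with positive confidence gaps g(x₁), g(x₂). Then ‖x₂ - x₁‖₂ ≥ (g(x₁) + g(x₂))/2. -/
theorem stmt_19 (n K : ℕ)
    (y : Fin K → EuclideanSpace ℝ (Fin n) → ℝ)
    (hy : ∀ k, ∀ a b, |y k a - y k b| ≤ ‖a - b‖)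
    (x₁ x₂ : EuclideanSpace ℝ (Fin n)) (i j : Fin K) (hij : i ≠ j)
    (g₁ g₂ : ℝ)
    (hg₁ : g₁ = y i x₁ -
      (Finset.univ.erase i).sup'
        ⟨j, Finset.mem_erase.mpr ⟨hij.symm, Finset.mem_univ j⟩⟩ (fun k => y k x₁))
    (hg₂ : g₂ = y j x₂ -
      (Finset.univ.erase j).sup'
        ⟨i, Finset.mem_erase.mpr ⟨hij, Finset.mem_univ i⟩⟩ (fun k => y k x₂))
    (hg₁pos : 0 < g₁) (hg₂pos : 0 < g₂) :
    ‖x₂ - x₁‖ ≥ (g₁ + g₂) / 2 := by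
  have h1 : y j x₁ ≤ (Finset.univ.erase i).sup'
      ⟨j, Finset.mem_erase.mpr ⟨hij.symm, Finset.mem_univ j⟩⟩ (fun k => y k x₁) :=
    Finset.le_sup' (fun k => y k x₁) (Finset.mem_erase.mpr ⟨hij.symm, Finset.mem_univ j⟩)
  have h2 : y i x₂ ≤ (Finset.univ.erase j).sup'
      ⟨i, Finset.mem_erase.mpr ⟨hij, Finset.mem_univ i⟩⟩ (fun k => y k x₂) :=
    Finset.le_sup' (fun k => y k x₂) (Finset.mem_erase.mpr ⟨hij, Finset.mem_univ i⟩)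
  have hi := (abs_le.mp (hy i x₁ x₂)).2
  have hj := (abs_le.mp (hy j x₂ x₁)).2
  have hn : ‖x₁ - x₂‖ = ‖x₂ - x₁‖ := norm_sub_rev _ _
  linarith
end
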